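/- Let κ be an integrable hyperkernel on a probability space (S, μ) and let f : S → [0,1] be measurable with f = 1 − e^{−S_κ(f)} pointwise and μ{x : f(x) > 0} > 0. Then T_κ(f)(x) ≥ f(x) for every x ∈ S, with strict inequality whenever f(x) > 0; consequently ∫_S (T_κ f)² dμ > ∫_S f² dμ (the left-hand side possibly being +∞). In particular, the L²(μ)-operator norm of T_κ exceeds 1. -/

import Mathlib

open MeasureTheory ENNReal Filter Topology

/-- The nonlinear operator `S_κ` associated to a hyperkernel `κ = (κ_r)_{r ≥ 2}`;
here `κ m` plays the role of `κ_{m+2}`. -/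
noncomputable def Sop {S : Type*} [MeasurableSpace S] (μ : Measure S)
    (κ : (m : ℕ) → (Fin (m + 2) → S) → ℝ≥0∞) (f : S → ℝ) (x : S) : ℝ≥0∞ :=
  ∑' m : ℕ, ((m : ℝ≥0∞) + 2) *
    ∫⁻ y : Fin (m + 1) → S,
      κ m (Fin.cons x y) * ENNReal.ofReal (1 - ∏ i, (1 - f (y i)))
      ∂(Measure.pi fun _ => μ)

/-- The edge kernel `κ_e` of a hyperkernel. -/
noncomputable def edgeKernel {S : Type*} [MeasurableSpace S] (μ : Measure S)
    (κ : (m : ℕ) → (Fin (m + 2) → S) → ℝ≥0∞) (x y : S) : ℝ≥0∞ :=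
  ∑' m : ℕ, ((m : ℝ≥0∞) + 2) * ((m : ℝ≥0∞) + 1) *
    ∫⁻ z : Fin m → S, κ m (Fin.cons x (Fin.cons y z)) ∂(Measure.pi fun _ => μ)

/-- The linear operator `T_κ`. -/
noncomputable def Tlin {S : Type*} [MeasurableSpace S] (μ : Measure S)
    (κ : (m : ℕ) → (Fin (m + 2) → S) → ℝ≥0∞) (f : S → ℝ) (x : S) : ℝ≥0∞ :=
  ∫⁻ y, edgeKernel μ κ x y * ENNReal.ofReal (f y) ∂μ

/-- All kernels of the family are measurable. -/
def HyperkernelMeasurable {S : Type*} [MeasurableSpace S]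
    (κ : (m : ℕ) → (Fin (m + 2) → S) → ℝ≥0∞) : Prop :=
  ∀ m, Measurable (κ m)

/-- Each kernel is invariant under all permutations of its arguments. -/
def HyperkernelSymm {S : Type*} [MeasurableSpace S]
    (κ : (m : ℕ) → (Fin (m + 2) → S) → ℝ≥0∞) : Prop :=
  ∀ m (σ : Equiv.Perm (Fin (m + 2))) (v : Fin (m + 2) → S), κ m (v ∘ σ) = κ m v

/-- Integrability of the hyperkernel: `∑_{r≥2} r ∫_{S^r} κ_r < ∞`. -/
def HyperkernelIntegrable {S : Type*} [MeasurableSpace S] (μ : Measure S)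
    (κ : (m : ℕ) → (Fin (m + 2) → S) → ℝ≥0∞) : Prop :=
  ∑' m : ℕ, ((m : ℝ≥0∞) + 2) *
    ∫⁻ v : Fin (m + 2) → S, κ m v ∂(Measure.pi fun _ => μ) ≠ ⊤

/-- `expNeg a = e^{-a}` for `a ∈ [0,∞]`, with `e^{-∞} = 0`. -/
noncomputable def expNeg (a : ℝ≥0∞) : ℝ := if a = ⊤ then 0 else Real.exp (-a.toReal)

/-- The operator `Φ_κ(f) = 1 - e^{-S_κ(f)}`. -/
noncomputable def Phi {S : Type*} [MeasurableSpace S] (μ : Measure S)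
    (κ : (m : ℕ) → (Fin (m + 2) → S) → ℝ≥0∞) (f : S → ℝ) (x : S) : ℝ :=
  1 - expNeg (Sop μ κ f x)

/-- Irreducibility of the hyperkernel. -/
def HyperkernelIrreducible {S : Type*} [MeasurableSpace S] (μ : Measure S)
    (κ : (m : ℕ) → (Fin (m + 2) → S) → ℝ≥0∞) : Prop :=
  ∀ A : Set S, MeasurableSet A →
    (∀ᵐ p ∂(μ.prod μ), p ∈ A ×ˢ Aᶜ → edgeKernel μ κ p.1 p.2 = 0) →
    μ A = 0 ∨ μ Aᶜ = 0

/-- The decreasing iterates `ρ_0 = 1`, `ρ_{t+1} = Φ_κ(ρ_t)`. -/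
noncomputable def rhoSeq {S : Type*} [MeasurableSpace S] (μ : Measure S)
    (κ : (m : ℕ) → (Fin (m + 2) → S) → ℝ≥0∞) : ℕ → S → ℝ
  | 0 => fun _ => 1
  | t + 1 => Phi μ κ (rhoSeq μ κ t)

/-- The pointwise limit `ρ_κ` of the decreasing iterates `Φ_κ^t(1)`. -/
noncomputable def rhoFun {S : Type*} [MeasurableSpace S] (μ : Measure S)
    (κ : (m : ℕ) → (Fin (m + 2) → S) → ℝ≥0∞) : S → ℝ :=
  fun x => ⨅ t : ℕ, rhoSeq μ κ t x

/-- The condition `‖T_κ‖ > 1` on the `L²(μ)` operator norm of `T_κ`. -/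
def TopNormGtOne {S : Type*} [MeasurableSpace S] (μ : Measure S)
    (κ : (m : ℕ) → (Fin (m + 2) → S) → ℝ≥0∞) : Prop :=
  ∃ h : S → ℝ, Measurable h ∧ (∀ x, 0 ≤ h x) ∧
    (∫⁻ x, ENNReal.ofReal (h x) ^ 2 ∂μ) ≤ 1 ∧ 1 < ∫⁻ x, (Tlin μ κ h x) ^ 2 ∂μ


section Aux
variable {S : Type*} [MeasurableSpace S]

lemma measurable_finCons {n : ℕ} :
    Measurable fun p : S × (Fin n → S) => (Fin.cons p.1 p.2 : Fin (n + 1) → S) := by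
  refine measurable_pi_lambda _ fun i => ?_
  induction i using Fin.cases with
  | zero => simpa using measurable_fst
  | succ j => simp only [Fin.cons_succ]; exact (measurable_pi_apply j).comp measurable_snd

lemma union_bound {n : ℕ} (a : Fin n → ℝ) (h0 : ∀ i, 0 ≤ a i) (h1 : ∀ i, a i ≤ 1) :
    1 - ∏ i, (1 - a i) ≤ ∑ i, a i := by
  induction n with
  | zero => simp
  | succ n ih =>
    rw [Fin.prod_univ_succ, Fin.sum_univ_succ]
    have hP0 : (0:ℝ) ≤ ∏ i : Fin n, (1 - a i.succ) :=
      Finset.prod_nonneg fun i _ => by linarith [h1 i.succ]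
    have hP1 : ∏ i : Fin n, (1 - a i.succ) ≤ 1 :=
      Finset.prod_le_one (fun i _ => by linarith [h1 i.succ]) (fun i _ => by linarith [h0 i.succ])
    have key := ih (fun i => a i.succ) (fun i => h0 i.succ) (fun i => h1 i.succ)
    nlinarith [h0 0, h1 0]

lemma expNeg_le (a : ℝ≥0∞) : ENNReal.ofReal (1 - expNeg a) ≤ a := by
  rcases eq_or_ne a ⊤ with rfl | ha
  · exact le_top
  · rw [expNeg, if_neg ha]
    calc ENNReal.ofReal (1 - Real.exp (-a.toReal)) ≤ ENNReal.ofReal a.toReal := by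
          apply ENNReal.ofReal_le_ofReal
          nlinarith [Real.add_one_le_exp (-a.toReal)]
      _ = a := ENNReal.ofReal_toReal ha

lemma expNeg_lt {a : ℝ≥0∞} (h0 : a ≠ 0) (ha : a ≠ ⊤) :
    ENNReal.ofReal (1 - expNeg a) < a := by
  rw [expNeg, if_neg ha]
  have ht : 0 < a.toReal := ENNReal.toReal_pos h0 ha
  calc ENNReal.ofReal (1 - Real.exp (-a.toReal)) < ENNReal.ofReal a.toReal := by
        rw [ENNReal.ofReal_lt_ofReal_iff ht]
        nlinarith [Real.add_one_lt_exp (show (-a.toReal) ≠ 0 by linarith)]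
    _ = a := ENNReal.ofReal_toReal ha

end Aux

section Key
variable {S : Type*} [MeasurableSpace S] (μ : Measure S) [IsProbabilityMeasure μ]
variable (κ : (m : ℕ) → (Fin (m + 2) → S) → ℝ≥0∞)

lemma cons_comp_swap {m : ℕ} (x : S) (y : Fin (m + 1) → S) (i : Fin (m + 1)) :
    (Fin.cons x y : Fin (m + 2) → S) ∘ (Equiv.swap (1 : Fin (m+2)) i.succ)
      = Fin.cons x (y ∘ Equiv.swap (0 : Fin (m+1)) i) := by
  have h10 : (1 : Fin (m+2)) = (0 : Fin (m+1)).succ := rfl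
  funext j
  induction j using Fin.cases with
  | zero =>
    have h : (Equiv.swap (1 : Fin (m+2)) i.succ) 0 = 0 := by
      rw [h10]
      exact Equiv.swap_apply_of_ne_of_ne (Fin.succ_ne_zero _).symm (Fin.succ_ne_zero _).symm
    simp only [Function.comp_apply, h, Fin.cons_zero]
  | succ k =>
    have h : (Equiv.swap (1 : Fin (m+2)) i.succ) k.succ
        = ((Equiv.swap (0 : Fin (m+1)) i) k).succ := by
      rw [h10]
      exact (Fin.succ_injective _).swap_apply _ _ _
    simp only [Function.comp_apply, h, Fin.cons_succ]

lemma term_perm {m : ℕ} (hκ : Measurable (κ m)) (hsymm : HyperkernelSymm κ)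
    {f : S → ℝ} (hf : Measurable f) (x : S) (i : Fin (m + 1)) :
    ∫⁻ y : Fin (m + 1) → S, κ m (Fin.cons x y) * ENNReal.ofReal (f (y i))
        ∂(Measure.pi fun _ => μ)
    = ∫⁻ y : Fin (m + 1) → S, κ m (Fin.cons x y) * ENNReal.ofReal (f (y 0))
        ∂(Measure.pi fun _ => μ) := by
  set τ : Equiv.Perm (Fin (m + 1)) := Equiv.swap (0 : Fin (m+1)) i with hτ
  have hconsx : Measurable fun y : Fin (m + 1) → S => (Fin.cons x y : Fin (m+2) → S) :=
    measurable_finCons.comp (measurable_const.prodMk measurable_id)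
  have hG : Measurable fun y : Fin (m + 1) → S =>
      κ m (Fin.cons x y) * ENNReal.ofReal (f (y 0)) :=
    (hκ.comp hconsx).mul (ENNReal.measurable_ofReal.comp (hf.comp (measurable_pi_apply 0)))
  have hmp : MeasurePreserving (MeasurableEquiv.arrowCongr' τ.symm (MeasurableEquiv.refl S))
      (Measure.pi fun _ : Fin (m+1) => μ) (Measure.pi fun _ : Fin (m+1) => μ) :=
    measurePreserving_arrowCongr' (fun _ => μ) (fun _ => μ) τ.symm (MeasurableEquiv.refl S)
      (fun _ => ⟨measurable_id, Measure.map_id⟩)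
  have := hmp.lintegral_comp hG
  rw [← this]
  refine lintegral_congr fun y => ?_
  have he : (MeasurableEquiv.arrowCongr' τ.symm (MeasurableEquiv.refl S)) y = y ∘ τ := rfl
  rw [he]
  have h1 : (y ∘ τ) 0 = y i := by simp [hτ]
  have h2 : (Fin.cons x (y ∘ τ) : Fin (m+2) → S) = (Fin.cons x y) ∘ (Equiv.swap (1 : Fin (m+2)) i.succ) :=
    (cons_comp_swap x y i).symm
  rw [h1, h2, hsymm m (Equiv.swap (1 : Fin (m+2)) i.succ) (Fin.cons x y)]

end Key

section Main
variable {S : Type*} [MeasurableSpace S] {μ : Measure S} [IsProbabilityMeasure μ]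
variable {κ : (m : ℕ) → (Fin (m + 2) → S) → ℝ≥0∞}

lemma kernel_meas (hmeas : HyperkernelMeasurable κ) (m : ℕ) (x : S) :
    Measurable fun a : S =>
      ∫⁻ z : Fin m → S, κ m (Fin.cons x (Fin.cons a z)) ∂(Measure.pi fun _ => μ) := by
  apply Measurable.lintegral_prod_right'
    (f := fun p : S × (Fin m → S) => κ m (Fin.cons x (Fin.cons p.1 p.2)))
  exact (hmeas m).comp (measurable_finCons.comp (measurable_const.prodMk measurable_finCons))

lemma Sop_le_Tlin (hmeas : HyperkernelMeasurable κ) (hsymm : HyperkernelSymm κ)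
    {f : S → ℝ} (hf : Measurable f) (hf01 : ∀ x, 0 ≤ f x ∧ f x ≤ 1) (x : S) :
    Sop μ κ f x ≤ Tlin μ κ f x := by
  have hg : Measurable fun y => ENNReal.ofReal (f y) := ENNReal.measurable_ofReal.comp hf
  have step : ∀ m : ℕ,
      ((m : ℝ≥0∞) + 2) * ∫⁻ y : Fin (m+1) → S,
          κ m (Fin.cons x y) * ENNReal.ofReal (1 - ∏ i, (1 - f (y i)))
          ∂(Measure.pi fun _ => μ)
      ≤ ∫⁻ a, ((m : ℝ≥0∞) + 2) * ((m : ℝ≥0∞) + 1) *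
          (∫⁻ z : Fin m → S, κ m (Fin.cons x (Fin.cons a z)) ∂(Measure.pi fun _ => μ))
          * ENNReal.ofReal (f a) ∂μ := by
    intro m
    have hconsx : Measurable fun y : Fin (m+1) → S => (Fin.cons x y : Fin (m+2) → S) :=
      measurable_finCons.comp (measurable_const.prodMk measurable_id)
    have hterm : ∀ i : Fin (m+1), Measurable fun y : Fin (m+1) → S =>
        κ m (Fin.cons x y) * ENNReal.ofReal (f (y i)) := fun i =>
      ((hmeas m).comp hconsx).mul (hg.comp (measurable_pi_apply i))
    have h1 : ∫⁻ y : Fin (m+1) → S, κ m (Fin.cons x y) *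
          ENNReal.ofReal (1 - ∏ i, (1 - f (y i))) ∂(Measure.pi fun _ => μ)
        ≤ ((m : ℝ≥0∞) + 1) * ∫⁻ y : Fin (m+1) → S,
          κ m (Fin.cons x y) * ENNReal.ofReal (f (y 0)) ∂(Measure.pi fun _ => μ) := by
      calc ∫⁻ y : Fin (m+1) → S, κ m (Fin.cons x y) *
            ENNReal.ofReal (1 - ∏ i, (1 - f (y i))) ∂(Measure.pi fun _ => μ)
          ≤ ∫⁻ y : Fin (m+1) → S, ∑ i : Fin (m+1),
            κ m (Fin.cons x y) * ENNReal.ofReal (f (y i)) ∂(Measure.pi fun _ => μ) := by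
            refine lintegral_mono fun y => ?_
            rw [← Finset.mul_sum]
            refine mul_le_mul_right ?_ _
            rw [← ENNReal.ofReal_sum_of_nonneg (fun i _ => (hf01 (y i)).1)]
            exact ENNReal.ofReal_le_ofReal
              (union_bound _ (fun i => (hf01 (y i)).1) (fun i => (hf01 (y i)).2))
        _ = ∑ i : Fin (m+1), ∫⁻ y : Fin (m+1) → S,
            κ m (Fin.cons x y) * ENNReal.ofReal (f (y i)) ∂(Measure.pi fun _ => μ) :=
            lintegral_finset_sum _ (fun i _ => hterm i)
        _ = ∑ _i : Fin (m+1), ∫⁻ y : Fin (m+1) → S,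
            κ m (Fin.cons x y) * ENNReal.ofReal (f (y 0)) ∂(Measure.pi fun _ => μ) :=
            Finset.sum_congr rfl (fun i _ => term_perm μ κ (hmeas m) hsymm hf x i)
        _ = ((m : ℝ≥0∞) + 1) * ∫⁻ y : Fin (m+1) → S,
            κ m (Fin.cons x y) * ENNReal.ofReal (f (y 0)) ∂(Measure.pi fun _ => μ) := by
            rw [Finset.sum_const, Finset.card_univ, Fintype.card_fin, nsmul_eq_mul]
            push_cast
            ring
    have hG : Measurable fun p : S × (Fin m → S) =>
        κ m (Fin.cons x (Fin.cons p.1 p.2)) * ENNReal.ofReal (f p.1) :=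
      ((hmeas m).comp (measurable_finCons.comp
        (measurable_const.prodMk measurable_finCons))).mul (hg.comp measurable_fst)
    have h2 : ∫⁻ y : Fin (m+1) → S, κ m (Fin.cons x y) * ENNReal.ofReal (f (y 0))
          ∂(Measure.pi fun _ => μ)
        = ∫⁻ a, (∫⁻ z : Fin m → S, κ m (Fin.cons x (Fin.cons a z))
            ∂(Measure.pi fun _ => μ)) * ENNReal.ofReal (f a) ∂μ := by
      have hmp := measurePreserving_piFinSuccAbove (fun _ : Fin (m+1) => (μ : Measure S)) 0
      calc ∫⁻ y : Fin (m+1) → S, κ m (Fin.cons x y) * ENNReal.ofReal (f (y 0))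
            ∂(Measure.pi fun _ => μ)
          = ∫⁻ y : Fin (m+1) → S,
              (fun p : S × (Fin m → S) => κ m (Fin.cons x (Fin.cons p.1 p.2)) *
                ENNReal.ofReal (f p.1))
              ((MeasurableEquiv.piFinSuccAbove (fun _ : Fin (m+1) => S) 0) y)
            ∂(Measure.pi fun _ => μ) := by
            refine lintegral_congr fun y => ?_
            have hy : (Fin.cons (y 0)
                (fun j => y ((0 : Fin (m+1)).succAbove j)) : Fin (m+1) → S) = y := by
              funext j
              induction j using Fin.cases with
              | zero => simp
              | succ k => simp [Fin.zero_succAbove]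
            simp only [MeasurableEquiv.piFinSuccAbove, MeasurableEquiv.coe_mk,
              Fin.insertNthEquiv, Equiv.coe_fn_symm_mk]
            rw [show Fin.removeNth (0 : Fin (m+1)) y = fun j => y (Fin.succAbove 0 j) from rfl, hy]
        _ = ∫⁻ p : S × (Fin m → S), κ m (Fin.cons x (Fin.cons p.1 p.2)) *
              ENNReal.ofReal (f p.1) ∂(μ.prod (Measure.pi fun _ => μ)) :=
            hmp.lintegral_comp hG
        _ = ∫⁻ a, ∫⁻ z : Fin m → S, κ m (Fin.cons x (Fin.cons a z)) *
              ENNReal.ofReal (f a) ∂(Measure.pi fun _ => μ) ∂μ :=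
            lintegral_prod _ hG.aemeasurable
        _ = ∫⁻ a, (∫⁻ z : Fin m → S, κ m (Fin.cons x (Fin.cons a z))
              ∂(Measure.pi fun _ => μ)) * ENNReal.ofReal (f a) ∂μ :=
            lintegral_congr fun a => lintegral_mul_const' _ _ ENNReal.ofReal_ne_top
    calc ((m : ℝ≥0∞) + 2) * ∫⁻ y : Fin (m+1) → S,
          κ m (Fin.cons x y) * ENNReal.ofReal (1 - ∏ i, (1 - f (y i)))
          ∂(Measure.pi fun _ => μ)
        ≤ ((m : ℝ≥0∞) + 2) * (((m : ℝ≥0∞) + 1) * ∫⁻ y : Fin (m+1) → S,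
          κ m (Fin.cons x y) * ENNReal.ofReal (f (y 0)) ∂(Measure.pi fun _ => μ)) :=
          mul_le_mul_right h1 _
      _ = ((m : ℝ≥0∞) + 2) * ((m : ℝ≥0∞) + 1) * ∫⁻ a,
          (∫⁻ z : Fin m → S, κ m (Fin.cons x (Fin.cons a z)) ∂(Measure.pi fun _ => μ))
          * ENNReal.ofReal (f a) ∂μ := by rw [h2, mul_assoc]
      _ = ∫⁻ a, ((m : ℝ≥0∞) + 2) * ((m : ℝ≥0∞) + 1) *
          (∫⁻ z : Fin m → S, κ m (Fin.cons x (Fin.cons a z)) ∂(Measure.pi fun _ => μ))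
          * ENNReal.ofReal (f a) ∂μ := by
          rw [← lintegral_const_mul' (((m : ℝ≥0∞) + 2) * ((m : ℝ≥0∞) + 1)) _
            (by finiteness)]
          exact lintegral_congr fun a => by ring
  calc Sop μ κ f x
      ≤ ∑' m : ℕ, ∫⁻ a, ((m : ℝ≥0∞) + 2) * ((m : ℝ≥0∞) + 1) *
        (∫⁻ z : Fin m → S, κ m (Fin.cons x (Fin.cons a z)) ∂(Measure.pi fun _ => μ))
        * ENNReal.ofReal (f a) ∂μ := ENNReal.tsum_le_tsum step
    _ = ∫⁻ a, ∑' m : ℕ, ((m : ℝ≥0∞) + 2) * ((m : ℝ≥0∞) + 1) *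
        (∫⁻ z : Fin m → S, κ m (Fin.cons x (Fin.cons a z)) ∂(Measure.pi fun _ => μ))
        * ENNReal.ofReal (f a) ∂μ :=
        (lintegral_tsum fun m =>
          ((measurable_const.mul (kernel_meas hmeas m x)).mul hg).aemeasurable).symm
    _ = Tlin μ κ f x := by
        refine lintegral_congr fun a => ?_
        simp only [Tlin, edgeKernel]
        exact ENNReal.tsum_mul_right


lemma edgeKernel_meas (hmeas : HyperkernelMeasurable κ) :
    Measurable fun p : S × S => edgeKernel μ κ p.1 p.2 := by
  simp only [edgeKernel]
  apply Measurable.ennreal_tsum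
  intro m
  apply Measurable.mul measurable_const
  apply Measurable.lintegral_prod_right'
    (f := fun q : (S × S) × (Fin m → S) => κ m (Fin.cons q.1.1 (Fin.cons q.1.2 q.2)))
  exact (hmeas m).comp (measurable_finCons.comp (measurable_fst.fst.prodMk
    (measurable_finCons.comp (measurable_fst.snd.prodMk measurable_snd))))

lemma Tlin_meas (hmeas : HyperkernelMeasurable κ) {f : S → ℝ} (hf : Measurable f) :
    Measurable (Tlin μ κ f) := by
  apply Measurable.lintegral_prod_right'
    (f := fun p : S × S => edgeKernel μ κ p.1 p.2 * ENNReal.ofReal (f p.2))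
  exact (edgeKernel_meas hmeas).mul (ENNReal.measurable_ofReal.comp (hf.comp measurable_snd))

end Main


/-- Lemma 2.6, `l_sc`, of the paper.
If `f : S → [0,1]` is measurable with `f = 1 - e^{-S_κ(f)}` pointwise and `μ{f > 0} > 0`,
then `f ≤ T_κ(f)` pointwise, strictly where `f > 0`, hence `∫ (T_κ f)² dμ > ∫ f² dμ`;
in particular the `L²(μ)` operator norm of `T_κ` exceeds `1`. -/
theorem stmt6 {S : Type*} [MeasurableSpace S] (μ : Measure S) [IsProbabilityMeasure μ]
    (κ : (m : ℕ) → (Fin (m + 2) → S) → ℝ≥0∞)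
    (hmeas : HyperkernelMeasurable κ) (hsymm : HyperkernelSymm κ)
    (hint : HyperkernelIntegrable μ κ)
    (f : S → ℝ) (hf : Measurable f) (hf01 : ∀ x, 0 ≤ f x ∧ f x ≤ 1)
    (hfix : ∀ x, f x = Phi μ κ f x)
    (hpos : 0 < μ {x | 0 < f x}) :
    (∀ x, ENNReal.ofReal (f x) ≤ Tlin μ κ f x) ∧
    (∀ x, 0 < f x → ENNReal.ofReal (f x) < Tlin μ κ f x) ∧
    (∫⁻ x, ENNReal.ofReal (f x) ^ 2 ∂μ < ∫⁻ x, (Tlin μ κ f x) ^ 2 ∂μ) ∧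
    TopNormGtOne μ κ := by
  have hST : ∀ x, Sop μ κ f x ≤ Tlin μ κ f x := Sop_le_Tlin hmeas hsymm hf hf01
  have hle : ∀ x, ENNReal.ofReal (f x) ≤ Tlin μ κ f x := by
    intro x
    rw [hfix x]
    exact le_trans (expNeg_le _) (hST x)
  have hlt : ∀ x, 0 < f x → ENNReal.ofReal (f x) < Tlin μ κ f x := by
    intro x hx
    have hS0 : Sop μ κ f x ≠ 0 := by
      intro h0
      rw [hfix x] at hx
      unfold Phi at hx
      rw [h0] at hx
      simp [expNeg] at hx
    rcases eq_or_ne (Sop μ κ f x) ⊤ with htop | htop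
    · have hT : Tlin μ κ f x = ⊤ := top_le_iff.mp (htop ▸ hST x)
      rw [hT]
      exact ENNReal.ofReal_lt_top
    · rw [hfix x]
      exact lt_of_lt_of_le (expNeg_lt hS0 htop) (hST x)
  have hTmeas : Measurable (Tlin μ κ f) := Tlin_meas hmeas hf
  have hfin : ∫⁻ x, ENNReal.ofReal (f x) ^ 2 ∂μ ≠ ⊤ := by
    have hb : ∀ x, ENNReal.ofReal (f x) ^ 2 ≤ 1 := by
      intro x
      have h1 : ENNReal.ofReal (f x) ≤ 1 := ENNReal.ofReal_le_one.mpr (hf01 x).2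
      calc ENNReal.ofReal (f x) ^ 2 ≤ 1 ^ 2 := pow_le_pow_left' h1 2
        _ = 1 := one_pow 2
    have hle1 : ∫⁻ x, ENNReal.ofReal (f x) ^ 2 ∂μ ≤ 1 := by
      calc ∫⁻ x, ENNReal.ofReal (f x) ^ 2 ∂μ ≤ ∫⁻ _x, (1 : ℝ≥0∞) ∂μ := lintegral_mono hb
        _ = 1 := by simp
    exact ne_top_of_le_ne_top ENNReal.one_ne_top hle1
  have hsq : ∫⁻ x, ENNReal.ofReal (f x) ^ 2 ∂μ < ∫⁻ x, (Tlin μ κ f x) ^ 2 ∂μ := by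
    refine lintegral_strict_mono_of_ae_le_of_ae_lt_on (s := {x | 0 < f x})
      (hTmeas.pow_const 2).aemeasurable hfin
      (ae_of_all _ fun x => pow_le_pow_left' (hle x) 2) hpos.ne' ?_
    exact ae_of_all _ fun x hx => (ENNReal.pow_lt_pow_left_iff two_ne_zero).mpr (hlt x hx)
  refine ⟨hle, hlt, hsq, ?_⟩
  have hI0 : 0 < ∫⁻ x, ENNReal.ofReal (f x) ^ 2 ∂μ := by
    rw [lintegral_pos_iff_support (hf.ennreal_ofReal.pow_const 2)]
    have hsupp : (Function.support fun x => ENNReal.ofReal (f x) ^ 2) = {x | 0 < f x} := by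
      ext x
      simp [Function.support, pow_eq_zero_iff, ENNReal.ofReal_eq_zero, not_le]
    rw [hsupp]
    exact hpos
  set I := ∫⁻ x, ENNReal.ofReal (f x) ^ 2 ∂μ with hI
  set c := I.toReal with hc
  have hc0 : 0 < c := ENNReal.toReal_pos hI0.ne' hfin
  have hsc : 0 < Real.sqrt c := Real.sqrt_pos.mpr hc0
  have hIc : I = ENNReal.ofReal c := (ENNReal.ofReal_toReal hfin).symm
  set d := ENNReal.ofReal (Real.sqrt c) with hd
  have hd0 : d ≠ 0 := by simp [hd, ENNReal.ofReal_eq_zero, not_le, hsc]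
  have hdt : d ≠ ⊤ := ENNReal.ofReal_ne_top
  have hdsq : d ^ 2 = I := by
    rw [sq, hd, ← ENNReal.ofReal_mul (Real.sqrt_nonneg c), Real.mul_self_sqrt hc0.le, ← hIc]
  have hdsq0 : d ^ 2 ≠ 0 := pow_ne_zero 2 hd0
  have hdsqt : d ^ 2 ≠ ⊤ := by rw [hdsq]; exact hfin
  have heq : ∀ x, ENNReal.ofReal (f x / Real.sqrt c) = ENNReal.ofReal (f x) * d⁻¹ := by
    intro x
    rw [ENNReal.ofReal_div_of_pos hsc, div_eq_mul_inv]
  refine ⟨fun x => f x / Real.sqrt c, hf.div_const _,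
    fun x => div_nonneg (hf01 x).1 (Real.sqrt_nonneg c), ?_, ?_⟩
  · refine le_of_eq ?_
    calc ∫⁻ x, ENNReal.ofReal (f x / Real.sqrt c) ^ 2 ∂μ
        = ∫⁻ x, ENNReal.ofReal (f x) ^ 2 * (d ^ 2)⁻¹ ∂μ := by
          refine lintegral_congr fun x => ?_
          rw [heq x, mul_pow, ← ENNReal.inv_pow]
      _ = I * (d ^ 2)⁻¹ := lintegral_mul_const' _ _ (ENNReal.inv_ne_top.mpr hdsq0)
      _ = 1 := by rw [hdsq]; exact ENNReal.mul_inv_cancel hI0.ne' hfin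
  · have hT : ∀ x, Tlin μ κ (fun y => f y / Real.sqrt c) x = Tlin μ κ f x * d⁻¹ := by
      intro x
      simp only [Tlin]
      rw [← lintegral_mul_const' d⁻¹ _ (ENNReal.inv_ne_top.mpr hd0)]
      exact lintegral_congr fun y => by rw [heq y, mul_assoc]
    calc (1 : ℝ≥0∞) = I * (d ^ 2)⁻¹ := by rw [hdsq]; exact (ENNReal.mul_inv_cancel hI0.ne' hfin).symm
      _ < (∫⁻ x, (Tlin μ κ f x) ^ 2 ∂μ) * (d ^ 2)⁻¹ := by
          rw [ENNReal.mul_lt_mul_iff_left (ENNReal.inv_ne_zero.mpr hdsqt) (ENNReal.inv_ne_top.mpr hdsq0)]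
          exact hsq
      _ = ∫⁻ x, (Tlin μ κ f x) ^ 2 * (d ^ 2)⁻¹ ∂μ :=
          (lintegral_mul_const' _ _ (ENNReal.inv_ne_top.mpr hdsq0)).symm
      _ = ∫⁻ x, (Tlin μ κ (fun y => f y / Real.sqrt c) x) ^ 2 ∂μ := by
          refine lintegral_congr fun x => ?_
          rw [hT x, mul_pow, ← ENNReal.inv_pow]
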